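/- The Riemann theta series converges absolutely: let F be a g×g complex symmetric matrix whose imaginary part is positive definite, and let z ∈ ℂ^g; then the series ∑_{n ∈ ℤ^g} exp(2πi(½ nᵀFn + nᵀz)) is absolutely convergent (the family of its terms is summable). -/

import Mathlib

open Complex

private theorem summable_exp_quad_lin (a b : ℝ) (ha : 0 < a) :
    Summable (fun m : ℤ => Real.exp (-a * (m : ℝ) ^ 2 + b * |(m : ℝ)|)) := by
  have h := summable_pow_mul_jacobiTheta₂_term_bound (b / (2 * Real.pi))
    (T := a / Real.pi) (by positivity) 0
  refine h.congr fun m => ?_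
  simp only [pow_zero, one_mul]
  congr 1
  have hpi := Real.pi_pos
  push_cast
  field_simp
  ring

private theorem summable_pi_prod : ∀ (g : ℕ) (h : Fin g → ℤ → ℝ), (∀ i m, 0 ≤ h i m) →
    (∀ i, Summable (h i)) → Summable (fun n : Fin g → ℤ => ∏ i, h i (n i)) := by
  intro g
  induction g with
  | zero => intro h _ _; simpa using summable_of_finite_support (Set.toFinite _)
  | succ g ih =>
    intro h h0 hs
    have key := (hs 0).mul_of_nonneg (ih (fun i => h i.succ) (fun i m => h0 _ _)
      (fun i => hs _)) (fun m => h0 0 m) (fun n => Finset.prod_nonneg fun i _ => h0 _ _)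
    have := ((Fin.consEquiv (fun _ : Fin (g + 1) => ℤ)).summable_iff
      (f := fun n : Fin (g + 1) → ℤ => ∏ i, h i (n i))).mp ?_
    · exact this
    · refine key.congr fun p => ?_
      simp [Fin.prod_univ_succ, Fin.consEquiv]

private theorem posdef_lower (g : ℕ) (M : Matrix (Fin g) (Fin g) ℝ) (hM : M.PosDef) :
    ∃ c > 0, ∀ x : Fin g → ℝ, c * (∑ i, x i ^ 2) ≤ ∑ i, ∑ j, x i * M i j * x j := by
  have hquad : ∀ x : Fin g → ℝ, x ≠ 0 → 0 < ∑ i, ∑ j, x i * M i j * x j := by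
    intro x hx
    have := hM.dotProduct_mulVec_pos hx
    simpa [dotProduct, Matrix.mulVec, Finset.mul_sum, mul_assoc] using this
  rcases Nat.eq_zero_or_pos g with hg | hg
  · subst hg
    exact ⟨1, one_pos, fun x => by simp⟩
  set Q : EuclideanSpace ℝ (Fin g) → ℝ := fun x => ∑ i, ∑ j, x i * M i j * x j with hQ
  have hcont : Continuous Q := by
    apply continuous_finset_sum
    intro i _
    apply continuous_finset_sum
    intro j _
    fun_prop
  have hsph : (Metric.sphere (0 : EuclideanSpace ℝ (Fin g)) 1).Nonempty := by
    have : Nonempty (Fin g) := ⟨⟨0, hg⟩⟩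
    exact NormedSpace.sphere_nonempty.mpr zero_le_one
  obtain ⟨x₀, hx₀s, hx₀min⟩ := (isCompact_sphere (0 : EuclideanSpace ℝ (Fin g)) 1).exists_isMinOn
    hsph hcont.continuousOn
  have hx₀norm : ‖x₀‖ = 1 := by simpa using hx₀s
  have hx₀ne : x₀ ≠ 0 := by intro h; rw [h] at hx₀norm; simp at hx₀norm
  have hc : 0 < Q x₀ := hquad x₀ (by simpa using hx₀ne)
  refine ⟨Q x₀, hc, fun x => ?_⟩
  rcases eq_or_ne x 0 with rfl | hx
  · simp
  · set y : EuclideanSpace ℝ (Fin g) := WithLp.toLp 2 x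
    have hyne : y ≠ 0 := by simpa [y] using hx
    have hny : 0 < ‖y‖ := norm_pos_iff.mpr hyne
    have hmem : (‖y‖⁻¹ • y) ∈ Metric.sphere (0 : EuclideanSpace ℝ (Fin g)) 1 := by
      simp [norm_smul, abs_of_pos (inv_pos.mpr hny), inv_mul_cancel₀ hny.ne']
    have hmin := hx₀min hmem
    have hscale : Q (‖y‖⁻¹ • y) = (‖y‖⁻¹) ^ 2 * Q y := by
      simp only [hQ, Finset.mul_sum]
      refine Finset.sum_congr rfl fun i _ => Finset.sum_congr rfl fun j _ => ?_
      show (‖y‖⁻¹ • y) i * M i j * (‖y‖⁻¹ • y) j = _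
      simp [Pi.smul_apply, smul_eq_mul]
      ring
    have hnormsq : ‖y‖ ^ 2 = ∑ i, x i ^ 2 := by
      rw [EuclideanSpace.norm_eq]
      rw [Real.sq_sqrt (by positivity)]
      exact Finset.sum_congr rfl fun i _ => by rw [Real.norm_eq_abs, _root_.sq_abs]
    have : Q x₀ ≤ (‖y‖⁻¹) ^ 2 * Q y := by rw [← hscale]; exact hmin
    calc Q x₀ * (∑ i, x i ^ 2) = Q x₀ * ‖y‖ ^ 2 := by rw [hnormsq]
      _ ≤ ((‖y‖⁻¹) ^ 2 * Q y) * ‖y‖ ^ 2 := by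
          apply mul_le_mul_of_nonneg_right this (by positivity)
      _ = Q y := by field_simp

theorem riemann_theta_summable (g : ℕ) (F : Matrix (Fin g) (Fin g) ℂ)
    (hsymm : F.transpose = F)
    (hpos : (Matrix.of fun i j => (F i j).im).PosDef)
    (z : Fin g → ℂ) :
    Summable (fun n : Fin g → ℤ =>
      Complex.exp (2 * Real.pi * Complex.I *
        ((1 / 2) * (∑ i, ∑ j, (n i : ℂ) * F i j * (n j : ℂ)) +
          ∑ i, (n i : ℂ) * z i))) := by
  obtain ⟨c, hc, hqlb⟩ := posdef_lower g (Matrix.of fun i j => (F i j).im) hpos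
  set v : Fin g → ℝ := fun i => (z i).im with hv
  have hpi := Real.pi_pos
  set h : Fin g → ℤ → ℝ :=
    fun i m => Real.exp (-(Real.pi * c) * (m : ℝ) ^ 2 + (2 * Real.pi * |v i|) * |(m : ℝ)|)
    with hh
  have hb : Summable (fun n : Fin g → ℤ => ∏ i, h i (n i)) :=
    summable_pi_prod g h (fun i m => (Real.exp_pos _).le)
      (fun i => summable_exp_quad_lin _ _ (by positivity))
  apply Summable.of_norm_bounded hb
  intro n
  have hre : (2 * Real.pi * Complex.I *
        ((1 / 2) * (∑ i, ∑ j, (n i : ℂ) * F i j * (n j : ℂ)) +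
          ∑ i, (n i : ℂ) * z i)).re =
      -Real.pi * (∑ i, ∑ j, (n i : ℝ) * (F i j).im * (n j : ℝ))
        - 2 * Real.pi * ∑ i, (n i : ℝ) * v i := by
    have hS : (∑ i, ∑ j, (n i : ℂ) * F i j * (n j : ℂ)).im
        = ∑ i, ∑ j, (n i : ℝ) * (F i j).im * (n j : ℝ) := by
      rw [Complex.im_sum]
      refine Finset.sum_congr rfl fun i _ => ?_
      rw [Complex.im_sum]
      refine Finset.sum_congr rfl fun j _ => ?_
      simp [Complex.mul_im, Complex.mul_re]
    have hT : (∑ i, (n i : ℂ) * z i).im = ∑ i, (n i : ℝ) * v i := by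
      rw [Complex.im_sum]
      exact Finset.sum_congr rfl fun i _ => by simp [Complex.mul_im, hv]
    have hw : ∀ w : ℂ, (2 * (Real.pi : ℂ) * Complex.I * w).re = -2 * Real.pi * w.im := by
      intro w
      simp [Complex.mul_re, Complex.mul_im]
    rw [hw]
    simp only [Complex.add_im, Complex.mul_im, hS, hT]
    simp
    ring
  rw [Complex.norm_exp, hre]
  have hprod : ∏ i, h i (n i) =
      Real.exp (∑ i, (-(Real.pi * c) * (n i : ℝ) ^ 2
        + (2 * Real.pi * |v i|) * |(n i : ℝ)|)) := by
    rw [Real.exp_sum]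
  rw [hprod]
  apply Real.exp_le_exp.mpr
  have hQ : c * ∑ i, ((n i : ℝ)) ^ 2 ≤ ∑ i, ∑ j, (n i : ℝ) * (F i j).im * (n j : ℝ) :=
    hqlb (fun i => (n i : ℝ))
  have hL : -(∑ i, (n i : ℝ) * v i) ≤ ∑ i, |(n i : ℝ)| * |v i| := by
    refine (neg_le_abs _).trans ?_
    refine (Finset.abs_sum_le_sum_abs _ _).trans ?_
    exact le_of_eq (Finset.sum_congr rfl fun i _ => abs_mul _ _)
  have hsum : ∑ i, (-(Real.pi * c) * (n i : ℝ) ^ 2 + (2 * Real.pi * |v i|) * |(n i : ℝ)|) =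
      -(Real.pi * c) * (∑ i, (n i : ℝ) ^ 2)
        + 2 * Real.pi * ∑ i, |(n i : ℝ)| * |v i| := by
    rw [Finset.sum_add_distrib, ← Finset.mul_sum]
    congr 1
    rw [Finset.mul_sum]
    exact Finset.sum_congr rfl fun i _ => by ring
  rw [hsum]
  have h1 : -Real.pi * (∑ i, ∑ j, (n i : ℝ) * (F i j).im * (n j : ℝ))
      ≤ -(Real.pi * c) * (∑ i, (n i : ℝ) ^ 2) := by nlinarith
  have h2 : -(2 * Real.pi * ∑ i, (n i : ℝ) * v i)
      ≤ 2 * Real.pi * ∑ i, |(n i : ℝ)| * |v i| := by nlinarith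
  linarith
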